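/- Let θ̂(t,y) = b/a + (Δμ/(ad))[1 + (ε/y)(1 - e^{-δ(T-t)})/δ] with a, b, Δμ, d, ε > 0 and δ ∈ ℝ (interpreting (1-e^{-δs})/δ as s when δ = 0). Then for all 0 ≤ t < T and y > 0: ∂θ̂/∂y < 0 and ∂θ̂/∂t < 0. -/

import Mathlib

/-- For the first-order approximation
`θ̂(t,y) = b/a + (Δμ/(ad))[1 + (ε/y)(1 - e^{-δ(T-t)})/δ]`, both partial
derivatives `∂θ̂/∂y` and `∂θ̂/∂t` are negative for `0 ≤ t < T`, `y > 0`. -/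
theorem stmt15 (a b Δμ d ε T δ : ℝ)
    (ha : 0 < a) (hb : 0 < b) (hΔμ : 0 < Δμ) (hd : 0 < d) (hε : 0 < ε)
    (g : ℝ → ℝ) (hg : g = fun s => if δ = 0 then s else (1 - Real.exp (-δ * s)) / δ)
    (θ : ℝ → ℝ → ℝ)
    (hθ : θ = fun t y => b / a + Δμ / (a * d) * (1 + ε / y * g (T - t))) :
    ∀ t y : ℝ, 0 ≤ t → t < T → 0 < y →
      deriv (fun y => θ t y) y < 0 ∧ deriv (fun t => θ t y) t < 0 := by
  have hC : 0 < Δμ / (a * d) := div_pos hΔμ (mul_pos ha hd)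
  have hgpos : ∀ s : ℝ, 0 < s → 0 < g s := by
    intro s hs
    rw [hg]
    by_cases h0 : δ = 0
    · simp [h0, hs]
    · simp only [h0, if_false]
      rcases lt_or_gt_of_ne h0 with hneg | hpos
      · have : 1 < Real.exp (-δ * s) := by
          rw [Real.one_lt_exp_iff]; nlinarith
        apply div_pos_of_neg_of_neg <;> linarith
      · have : Real.exp (-δ * s) < 1 := by
          rw [Real.exp_lt_one_iff]; nlinarith
        apply div_pos <;> linarith
  have hgderiv : ∀ s : ℝ, HasDerivAt g (Real.exp (-δ * s)) s := by
    intro s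
    rw [hg]
    by_cases h0 : δ = 0
    · simp only [h0, if_true, neg_zero, zero_mul, Real.exp_zero]
      exact hasDerivAt_id s
    · simp only [h0, if_false]
      have h1 : HasDerivAt (fun x : ℝ => -δ * x) (-δ) s := by
        simpa using (hasDerivAt_id s).const_mul (-δ)
      have h2 : HasDerivAt (fun x : ℝ => Real.exp (-δ * x)) (Real.exp (-δ * s) * (-δ)) s :=
        (Real.hasDerivAt_exp (-δ * s)).comp s h1
      have h3 : HasDerivAt (fun x : ℝ => (1 - Real.exp (-δ * x)) / δ)
          ((0 - Real.exp (-δ * s) * (-δ)) / δ) s :=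
        ((hasDerivAt_const s (1 : ℝ)).sub h2).div_const δ
      convert h3 using 1
      field_simp
      ring
  intro t y ht htT hy
  have hK : 0 < g (T - t) := hgpos (T - t) (by linarith)
  have hy' : y ≠ 0 := ne_of_gt hy
  constructor
  · have hδy : HasDerivAt (fun y : ℝ => θ t y)
        (Δμ / (a * d) * (ε * -(y ^ 2)⁻¹ * g (T - t))) y := by
      rw [hθ]
      simp only [div_eq_mul_inv ε]
      exact ((((hasDerivAt_inv hy').const_mul ε).mul_const (g (T - t))).const_add
        1).const_mul _ |>.const_add _
    rw [hδy.deriv]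
    have h2 : 0 < (y ^ 2)⁻¹ := by positivity
    nlinarith [mul_pos hC (mul_pos (mul_pos hε h2) hK)]
  · have hδt : HasDerivAt (fun t : ℝ => θ t y)
        (Δμ / (a * d) * (ε / y * (Real.exp (-δ * (T - t)) * (0 - 1)))) t := by
      rw [hθ]
      have hsub : HasDerivAt (fun t : ℝ => T - t) (0 - 1) t :=
        (hasDerivAt_const t T).sub (hasDerivAt_id t)
      have hcomp : HasDerivAt (fun t : ℝ => g (T - t))
          (Real.exp (-δ * (T - t)) * (0 - 1)) t :=
        (hgderiv (T - t)).comp t hsub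
      exact ((hcomp.const_mul (ε / y)).const_add 1).const_mul _ |>.const_add _
    rw [hδt.deriv]
    have he : 0 < Real.exp (-δ * (T - t)) := Real.exp_pos _
    have h3 : 0 < ε / y := div_pos hε hy
    nlinarith [mul_pos hC (mul_pos h3 he)]
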